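/- For real x and y, the bivariate Hermite–Konhauser polynomial satisfies the Mittag-Leffler representation H_n^{ϱ,υ}(x,y) = (2x)^n E_{ϱ+1,υ}^{(-n;-n;-n)}(-1/(4x²), y) for x ≠ 0, where H_n^{ϱ,υ}(x,y) := Σ_{s=0}^{⌊n/2⌋} Σ_{r=0}^{n-s} [(-1)^s (-n)_{2s} (-n)_{s+r} / ((-n)_s Γ(ϱ+1+υr) s! r!)] (2x)^{n-2s} y^{υr} and E_{ϱ,υ}^{(γ₁;γ₂;γ₃)}(x,y) := Σ_{s,r≥0} (γ₁)_{2s}(γ₂)_{s+r} x^s y^{υr} / ((γ₃)_s Γ(ϱ+υr) r! s!). -/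

import Mathlib

/-- Pochhammer symbol (rising factorial) on ℝ. -/
noncomputable def poch (a : ℝ) (k : ℕ) : ℝ := ∏ i ∈ Finset.range k, (a + i)

/-- Bivariate Hermite–Konhauser polynomial. -/
noncomputable def HK (ϱ : ℝ) (υ n : ℕ) (x y : ℝ) : ℝ :=
  ∑ s ∈ Finset.range (n / 2 + 1), ∑ r ∈ Finset.range (n - s + 1),
    (-1 : ℝ) ^ s * poch (-(n : ℝ)) (2 * s) * poch (-(n : ℝ)) (s + r) /
        (poch (-(n : ℝ)) s * Real.Gamma (ϱ + 1 + υ * r) * s.factorial * r.factorial) *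
      (2 * x) ^ (n - 2 * s) * y ^ (υ * r)

/-- Bivariate Mittag-Leffler function E_{ϱ,υ}^{(γ₁;γ₂;γ₃)}(x,y). -/
noncomputable def HKML (ϱ : ℝ) (υ : ℕ) (γ₁ γ₂ γ₃ : ℝ) (x y : ℝ) : ℝ :=
  ∑' s : ℕ, ∑' r : ℕ,
    poch γ₁ (2 * s) * poch γ₂ (s + r) * x ^ s * y ^ (υ * r) /
      (poch γ₃ s * Real.Gamma (ϱ + υ * r) * r.factorial * s.factorial)

lemma poch_neg_nat_eq_zero {n k : ℕ} (h : n < k) : poch (-(n : ℝ)) k = 0 := by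
  unfold poch
  apply Finset.prod_eq_zero (Finset.mem_range.mpr h)
  simp

lemma poch_neg_nat_ne_zero {n k : ℕ} (h : k ≤ n) : poch (-(n : ℝ)) k ≠ 0 := by
  unfold poch
  rw [Finset.prod_ne_zero_iff]
  intro i hi
  simp only [Finset.mem_range] at hi
  have : (i : ℝ) < (n : ℝ) := by exact_mod_cast lt_of_lt_of_le hi h
  intro hc
  linarith

theorem stmt19 (ϱ : ℝ) (hϱ : -1 < ϱ) (υ : ℕ) (hυ : 1 ≤ υ) (n : ℕ)
    (x y : ℝ) (hx : x ≠ 0) :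
    HK ϱ υ n x y =
      (2 * x) ^ n * HKML (ϱ + 1) υ (-(n : ℝ)) (-(n : ℝ)) (-(n : ℝ))
        (-1 / (4 * x ^ 2)) y := by
  have h2x : (2 * x) ≠ 0 := mul_ne_zero two_ne_zero hx
  unfold HK HKML
  rw [tsum_eq_sum (s := Finset.range (n / 2 + 1)) (by
    intro s hs
    have hns : n < 2 * s := by
      simp only [Finset.mem_range] at hs; omega
    have hp : poch (-(n : ℝ)) (2 * s) = 0 := poch_neg_nat_eq_zero hns
    simp [hp])]
  rw [Finset.mul_sum]
  apply Finset.sum_congr rfl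
  intro s hs
  have hs2 : 2 * s ≤ n := by
    simp only [Finset.mem_range] at hs; omega
  rw [tsum_eq_sum (s := Finset.range (n - s + 1)) (by
    intro r hr
    have : n < s + r := by
      simp only [Finset.mem_range] at hr; omega
    have hp : poch (-(n : ℝ)) (s + r) = 0 := poch_neg_nat_eq_zero this
    simp [hp])]
  rw [Finset.mul_sum]
  apply Finset.sum_congr rfl
  intro r hr
  have hG : Real.Gamma (ϱ + 1 + υ * r) ≠ 0 := by
    apply ne_of_gt
    apply Real.Gamma_pos_of_pos
    have : (0:ℝ) ≤ (υ : ℝ) * r := by positivity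
    linarith
  have hC : poch (-(n : ℝ)) s ≠ 0 := poch_neg_nat_ne_zero (by omega)
  have h4 : (4 : ℝ) * x ^ 2 = (2 * x) ^ 2 := by ring
  have key : (2 * x) ^ n = (2 * x) ^ (n - 2 * s) * ((2 * x) ^ 2) ^ s := by
    rw [← pow_mul, ← pow_add]
    congr 1
    omega
  rw [h4, key]
  have hs' : (s.factorial : ℝ) ≠ 0 := by exact_mod_cast s.factorial_ne_zero
  have hr' : (r.factorial : ℝ) ≠ 0 := by exact_mod_cast r.factorial_ne_zero
  field_simp
  ring_nf
  have hx2 : x ^ (s * 2) * x⁻¹ ^ (s * 2) = 1 := by rw [← mul_pow, mul_inv_cancel₀ hx, one_pow]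
  have h14 : ((-1:ℝ) / 4) ^ s * 4 ^ s = (-1) ^ s := by rw [← mul_pow]; norm_num
  rw [mul_assoc _ (x ^ (s * 2)), mul_assoc _ (x ^ (s*2) * _), hx2]
  linear_combination (poch (-↑n) (s * 2) * poch (-↑n) (s + r) * y ^ (r * υ)) * h14.symm
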